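/- A finite group G is nilpotent if and only if the diagonal subgroup {(g,g) : g ∈ G} is a subnormal subgroup of G × G. -/

import Mathlib

/-- Quillen lifting property: `f ⧄ g`. -/
def Lifts {A B X Y : Type*} [Group A] [Group B] [Group X] [Group Y]
    (f : A →* B) (g : X →* Y) : Prop :=
  ∀ (i : A →* X) (j : B →* Y), g.comp i = j.comp f →
    ∃ h : B →* X, h.comp f = i ∧ g.comp h = j

/-- `D` is a subnormal subgroup of `G`. -/
def IsSubnormalSubgroup {G : Type*} [Group G] (D : Subgroup G) : Prop :=
  ∃ (n : ℕ) (c : ℕ → Subgroup G), c 0 = D ∧ c n = ⊤ ∧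
    ∀ i < n, c i ≤ c (i + 1) ∧ ((c i).subgroupOf (c (i + 1))).Normal

private lemma chain_mono {K : Type*} [Group K] {n : ℕ} {c : ℕ → Subgroup K}
    (hc : ∀ i < n, c i ≤ c (i + 1)) : ∀ j ≤ n, ∀ i ≤ j, c i ≤ c j := by
  intro j hj
  induction j with
  | zero => intro i hi; simp [Nat.le_zero.mp hi]
  | succ m ih =>
    intro i hi
    rcases Nat.eq_or_lt_of_le hi with h | h
    · simp [h]
    · exact le_trans (ih (le_trans (Nat.le_succ m) hj) i (Nat.lt_succ_iff.mp h))
        (hc m (Nat.lt_of_succ_le hj))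

theorem stmt16 {G : Type*} [Group G] [Finite G] :
    Group.IsNilpotent G ↔
      IsSubnormalSubgroup ((MonoidHom.id G).prod (MonoidHom.id G)).range := by
  constructor
  · intro hG
    -- G × G is nilpotent, hence satisfies the normalizer condition
    have hNC : NormalizerCondition (G × G) := normalizerCondition_of_isNilpotent
    set D : Subgroup (G × G) := ((MonoidHom.id G).prod (MonoidHom.id G)).range with hD
    set f : ℕ → Subgroup (G × G) := fun i => (fun H : Subgroup (G × G) => Subgroup.normalizer (H : Set (G × G)))^[i] D with hf
    have hstep : ∀ i, f (i + 1) = Subgroup.normalizer (f i : Set (G × G)) := by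
      intro i; simp [hf, Function.iterate_succ_apply']
    have hle : ∀ i, f i ≤ f (i + 1) := by
      intro i; rw [hstep]; exact Subgroup.le_normalizer
    have hlt : ∀ i, f i ≠ ⊤ → f i < f (i + 1) := by
      intro i hi; rw [hstep]; exact hNC _ (lt_top_iff_ne_top.mpr hi)
    have hcard : ∀ i, f i ≠ ⊤ → i < Nat.card (f i) := by
      intro i
      induction i with
      | zero => intro _; exact Nat.card_pos
      | succ m ih =>
        intro hm
        have hm' : f m ≠ ⊤ := by
          intro h
          apply hm
          rw [hstep, h, Subgroup.normalizer_eq_top_iff]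
          infer_instance
        have h1 : m < Nat.card (f m) := ih hm'
        have h2 : Nat.card (f m) < Nat.card (f (m + 1)) := by
          have hssub : ((f m : Set (G × G)) ⊂ (f (m+1) : Set (G × G))) := by
            exact_mod_cast hlt m hm'
          have := Set.ncard_lt_ncard hssub (Set.toFinite _)
          simp only [← Nat.card_coe_set_eq] at this; exact this
        omega
    have htop : f (Nat.card (G × G)) = ⊤ := by
      by_contra h
      have h1 := hcard _ h
      have h2 : Nat.card (f (Nat.card (G × G))) ≤ Nat.card (G × G) :=
        Subgroup.card_le_card_group _
      omega
    refine ⟨Nat.card (G × G), f, rfl, htop, fun i _ => ⟨hle i, ?_⟩⟩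
    rw [hstep]
    exact Subgroup.normal_in_normalizer
  · rintro ⟨n, c, hc0, hcn, hc⟩
    set D : Subgroup (G × G) := ((MonoidHom.id G).prod (MonoidHom.id G)).range with hD
    have hmono := chain_mono (fun i hi => (hc i hi).1)
    have hDle : ∀ j ≤ n, D ≤ c j := fun j hj => hc0 ▸ hmono j hj 0 (Nat.zero_le j)
    -- key claim: the image of the lower central series under g ↦ (g, 1) descends the chain
    have key : ∀ i ≤ n, ((⊤ : Subgroup G).lowerCentralSeries i).map (MonoidHom.inl G G) ≤ c (n - i) := by
      intro i
      induction i with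
      | zero => intro _; simp [hcn]
      | succ m ih =>
        intro hm
        have ihm := ih (le_of_lt (Nat.lt_of_succ_le hm))
        have hsucc : (⊤ : Subgroup G).lowerCentralSeries (m + 1) = ⁅(⊤ : Subgroup G).lowerCentralSeries m, ⊤⁆ := rfl
        rw [hsucc, Subgroup.map_commutator, Subgroup.commutator_le]
        intro a ha b hb
        rcases Subgroup.mem_map.mp ha with ⟨x, hx, rfl⟩
        rcases Subgroup.mem_map.mp hb with ⟨y, -, rfl⟩
        -- ⁅(x,1),(y,1)⁆ = ⁅(x,1),(y,y)⁆
        open scoped commutatorElement in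
        have heq : ⁅MonoidHom.inl G G x, MonoidHom.inl G G y⁆
            = (MonoidHom.inl G G x) * (y, y) * (MonoidHom.inl G G x)⁻¹ * (y, y)⁻¹ := by
          simp [commutatorElement_def, Prod.ext_iff, MonoidHom.inl_apply, mul_assoc]
        rw [heq]
        have hlev : n - (m + 1) < n := by omega
        have hsub : n - (m + 1) + 1 = n - m := by omega
        obtain ⟨hle', hnorm⟩ := hc (n - (m + 1)) hlev
        rw [hsub] at hle' hnorm
        -- (y, y) ∈ c (n - (m+1)) ⊆ c (n - m); (x, 1) ∈ c (n - m)
        have hyD : (y, y) ∈ D := ⟨y, rfl⟩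
        have hy1 : (y, y) ∈ c (n - (m + 1)) := hDle _ (by omega) hyD
        have hx1 : MonoidHom.inl G G x ∈ c (n - m) :=
          ihm (Subgroup.mem_map.mpr ⟨x, hx, rfl⟩)
        have hconj := hnorm.conj_mem ⟨(y, y), hle' hy1⟩
          (Subgroup.mem_subgroupOf.mpr hy1) ⟨MonoidHom.inl G G x, hx1⟩
        have hconj' : (MonoidHom.inl G G x) * (y, y) * (MonoidHom.inl G G x)⁻¹
            ∈ c (n - (m + 1)) := by
          have := Subgroup.mem_subgroupOf.mp hconj
          simpa using this
        exact mul_mem hconj' (inv_mem hy1)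
    have hbot : (⊤ : Subgroup G).lowerCentralSeries n = ⊥ := by
      have h1 := key n le_rfl
      rw [Nat.sub_self, hc0] at h1
      rw [eq_bot_iff]
      intro g hg
      have : MonoidHom.inl G G g ∈ D := h1 (Subgroup.mem_map.mpr ⟨g, hg, rfl⟩)
      rcases this with ⟨h, hh⟩
      simp only [MonoidHom.prod_apply, MonoidHom.id_apply, MonoidHom.inl_apply,
        Prod.ext_iff] at hh
      simp [Subgroup.mem_bot, ← hh.1, hh.2]
    exact Subgroup.nilpotent_iff_lowerCentralSeries.mpr ⟨n, hbot⟩
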